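/- For any r-partite hypergraph G = (A_1,...,A_r, E) with E nonempty, the optimal no-signaling simultaneous guessing probability of the hypergraph game P^G is at most ν_f(G)/|E|, where ν_f(G) is the maximum value of a fractional matching of G. -/

import Mathlib

open scoped Classical

/-- For an r-partite hypergraph G, the winning probability of any no-signaling
strategy in the game P^G is at most ν_f(G)/|E|, where ν_f(G) is the maximum
value of a fractional matching. -/
theorem ns_value_hypergraph_game_le
    (r : ℕ) (A : Fin r → Type) [∀ i, Fintype (A i)]
    (E : Finset (∀ i, A i)) (hE : E.Nonempty)
    (νf : ℝ)
    (hνf : IsGreatest {s : ℝ | ∃ g : (∀ i, A i) → ℝ,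
        (∀ e ∈ E, 0 ≤ g e ∧ g e ≤ 1) ∧
        (∀ i, ∀ v : A i, ∑ e ∈ E.filter (fun e => e i = v), g e ≤ 1) ∧
        s = ∑ e ∈ E, g e} νf)
    (Q : (Fin r → (∀ j, A j)) → (∀ i, A i) → ℝ)
    (hQ0 : ∀ o a, 0 ≤ Q o a)
    (hQ1 : ∀ a, ∑ o : Fin r → (∀ j, A j), Q o a = 1)
    (hQE : ∀ o a, (∃ i, o i ∉ E) → Q o a = 0)
    (hQns : ∀ (i : Fin r) (a a' : ∀ j, A j), a i = a' i →
        ∀ ei : ∀ j, A j,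
          (∑ o : Fin r → (∀ j, A j), if o i = ei then Q o a else 0) =
          (∑ o : Fin r → (∀ j, A j), if o i = ei then Q o a' else 0)) :
    (∑ e ∈ E, Q (fun _ => e) e) / (E.card : ℝ) ≤ νf / (E.card : ℝ) := by
  obtain ⟨e₀, he₀⟩ := hE
  set g : (∀ i, A i) → ℝ := fun e => Q (fun _ => e) e with hg
  -- each g e is ≤ the marginal
  have hmarg : ∀ (i : Fin r) (e : ∀ j, A j),
      g e ≤ ∑ o : Fin r → (∀ j, A j), if o i = e then Q o e else 0 := by
    intro i e
    have : g e = (if (fun _ => e) i = e then Q (fun _ => e) e else 0) := by simp [hg]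
    rw [this]
    exact Finset.single_le_sum (f := fun o => if o i = e then Q o e else 0)
      (fun o _ => by split <;> simp [hQ0]) (Finset.mem_univ (fun _ => e))
  have hmem : (∑ e ∈ E, g e) ∈ {s : ℝ | ∃ g : (∀ i, A i) → ℝ,
      (∀ e ∈ E, 0 ≤ g e ∧ g e ≤ 1) ∧
      (∀ i, ∀ v : A i, ∑ e ∈ E.filter (fun e => e i = v), g e ≤ 1) ∧
      s = ∑ e ∈ E, g e} := by
    refine ⟨g, ?_, ?_, rfl⟩
    · intro e _
      refine ⟨hQ0 _ _, ?_⟩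
      calc g e ≤ ∑ o : Fin r → (∀ j, A j), Q o e :=
            Finset.single_le_sum (fun o _ => hQ0 o e) (Finset.mem_univ (fun _ => e))
        _ = 1 := hQ1 e
    · intro i v
      set a₀ : ∀ j, A j := Function.update e₀ i v with ha₀
      have ha₀i : a₀ i = v := by simp [ha₀]
      have step1 : ∀ e ∈ E.filter (fun e => e i = v),
          g e ≤ ∑ o : Fin r → (∀ j, A j), if o i = e then Q o a₀ else 0 := by
        intro e he
        rw [Finset.mem_filter] at he
        have := hQns i e a₀ (by rw [he.2, ha₀i]) e
        calc g e ≤ ∑ o : Fin r → (∀ j, A j), if o i = e then Q o e else 0 := hmarg i e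
          _ = _ := this
      calc ∑ e ∈ E.filter (fun e => e i = v), g e
          ≤ ∑ e ∈ E.filter (fun e => e i = v),
              ∑ o : Fin r → (∀ j, A j), if o i = e then Q o a₀ else 0 :=
            Finset.sum_le_sum step1
        _ ≤ ∑ e : (∀ j, A j),
              ∑ o : Fin r → (∀ j, A j), if o i = e then Q o a₀ else 0 := by
            apply Finset.sum_le_sum_of_subset_of_nonneg (Finset.subset_univ _)
            intro e _ _
            exact Finset.sum_nonneg fun o _ => by split <;> simp [hQ0]
        _ = ∑ o : Fin r → (∀ j, A j), ∑ e : (∀ j, A j),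
              if o i = e then Q o a₀ else 0 := Finset.sum_comm
        _ = ∑ o : Fin r → (∀ j, A j), Q o a₀ := by
            apply Finset.sum_congr rfl
            intro o _
            simp
        _ = 1 := hQ1 a₀
  have hle : (∑ e ∈ E, g e) ≤ νf := hνf.2 hmem
  have hcard : (0 : ℝ) < (E.card : ℝ) := by
    exact_mod_cast Finset.card_pos.mpr ⟨e₀, he₀⟩
  exact div_le_div_of_nonneg_right hle hcard.le
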